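/- Let (R, m) be a commutative noetherian local ring and M an R-module with M ≠ mM. Then depth_R M ≤ ldim_R M ≤ dim_R M, where ldim_R M = inf { dim_R (Rx) : x ∈ M \ mM } is the little dimension of M. -/

import Mathlib

open IsLocalRing CategoryTheory

section Aux

variable {R : Type*} [CommRing R]

lemma aux_minimal {I p : Ideal R} (hp : p ∈ I.minimalPrimes) {r : R} (hr : r ∈ p) :
    ∃ (k : ℕ) (u : R), u ∉ p ∧ u * r ^ k ∈ I := by
  by_contra h
  push_neg at h
  have hpp : p.IsPrime := hp.1.1
  haveI := hpp
  set S : Submonoid R := Submonoid.powers r ⊔ p.primeCompl with hS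
  have hdisj : Disjoint (I : Set R) (S : Set R) := by
    rw [Set.disjoint_left]
    rintro a haI haS
    rw [SetLike.mem_coe, hS, Submonoid.mem_sup] at haS
    obtain ⟨y, ⟨k, rfl⟩, z, hz, rfl⟩ := haS
    exact h k z hz (by rwa [mul_comm] at haI)
  obtain ⟨q, hq, hIq, hqS⟩ := Ideal.exists_le_prime_disjoint I S hdisj
  have hqp : q ≤ p := by
    intro a haq
    by_contra hap
    exact Set.disjoint_left.mp hqS haq
      (show a ∈ S from Submonoid.mem_sup.mpr ⟨1, ⟨0, by simp⟩, a, hap, one_mul a⟩)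
  have hpq : p ≤ q := hp.2 ⟨hq, hIq⟩ hqp
  exact Set.disjoint_left.mp hqS (hpq hr)
    (show r ∈ S from Submonoid.mem_sup.mpr ⟨r, ⟨1, pow_one r⟩, 1, p.primeCompl.one_mem, mul_one r⟩)

end Aux

section Key

variable (R : Type*) [CommRing R] [IsLocalRing R] [IsNoetherianRing R]

open RingTheory.Sequence Submodule Pointwise

lemma key : ∀ (rs : List R) (M : Type*) [AddCommGroup M] [Module R M],
    (∀ r ∈ rs, r ∈ maximalIdeal R) → IsWeaklyRegular M rs →
    ∀ x : M, x ∉ (maximalIdeal R • ⊤ : Submodule R M) →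
    ∃ l : LTSeries (PrimeSpectrum R), l.length = rs.length ∧
      Ideal.torsionOf R M x ≤ l.head.asIdeal := by
  intro rs
  induction rs with
  | nil =>
    intro M _ _ _ _ x hx
    have hx0 : x ≠ 0 := fun h => hx (h ▸ Submodule.zero_mem _)
    refine ⟨RelSeries.singleton _ ⟨maximalIdeal R, inferInstance⟩, rfl, ?_⟩
    exact le_maximalIdeal (fun h => hx0 ((Ideal.torsionOf_eq_top_iff R x).mp h))
  | cons r rs ih =>
    intro M _ _ hmem hreg x hx
    obtain ⟨hr1, hr2⟩ := (isWeaklyRegular_cons_iff M r rs).mp hreg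
    have hrm : r ∈ maximalIdeal R := hmem r List.mem_cons_self
    set Q := QuotSMulTop r M with hQ
    set xb : Q := Submodule.Quotient.mk x with hxb
    have hrtop : (r • ⊤ : Submodule R M) ≤ maximalIdeal R • ⊤ := by
      rw [← Submodule.ideal_span_singleton_smul]
      exact Submodule.smul_mono_left ((Ideal.span_le).mpr (by simpa using hrm))
    have hxbm : xb ∉ (maximalIdeal R • ⊤ : Submodule R Q) := by
      intro hmemb
      have : (maximalIdeal R • ⊤ : Submodule R Q) =
          Submodule.map (Submodule.mkQ _) (maximalIdeal R • ⊤ : Submodule R M) := by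
        rw [Submodule.map_smul'', Submodule.map_top, Submodule.range_mkQ]
      rw [this, Submodule.mem_map] at hmemb
      obtain ⟨y, hy, hyx⟩ := hmemb
      have : x - y ∈ (r • ⊤ : Submodule R M) := by
        rw [← Submodule.Quotient.eq]
        exact hyx.symm
      have hxy : x = y + (x - y) := by abel
      exact hx (hxy ▸ Submodule.add_mem _ hy (hrtop ‹x - y ∈ _›))
    obtain ⟨l, hlen, hhead⟩ := ih Q (fun s hs => hmem s (List.mem_cons_of_mem r hs)) hr2 xb hxbm
    have htors : Ideal.torsionOf R M x ≤ Ideal.torsionOf R Q xb := by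
      intro a ha
      rw [Ideal.mem_torsionOf_iff] at ha ⊢
      rw [hxb, ← Submodule.Quotient.mk_smul, ha, Submodule.Quotient.mk_zero]
    have hrxb : r ∈ Ideal.torsionOf R Q xb := by
      rw [Ideal.mem_torsionOf_iff, hxb, ← Submodule.Quotient.mk_smul,
        Submodule.Quotient.mk_eq_zero]
      exact Submodule.smul_mem_pointwise_smul x r ⊤ trivial
    have hrp0 : r ∈ l.head.asIdeal := hhead hrxb
    have htp0 : Ideal.torsionOf R M x ≤ l.head.asIdeal := htors.trans hhead
    haveI : l.head.asIdeal.IsPrime := l.head.isPrime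
    obtain ⟨q, hqmin, hqle⟩ := Ideal.exists_minimalPrimes_le htp0
    have hqne : q ≠ l.head.asIdeal := by
      rintro rfl
      obtain ⟨k, u, hu, huk⟩ := aux_minimal hqmin hrp0
      rw [Ideal.mem_torsionOf_iff, mul_comm, mul_smul] at huk
      have : u • x = 0 := (hr1.pow k)
        (show (r ^ k) • (u • x) = (r ^ k) • (0 : M) by rw [huk, smul_zero])
      exact hu (hqmin.1.2 (by rwa [Ideal.mem_torsionOf_iff]))
    have hqlt : (⟨q, hqmin.1.1⟩ : PrimeSpectrum R) < l.head :=
      (PrimeSpectrum.asIdeal_lt_asIdeal _ _).mp (lt_of_le_of_ne hqle hqne)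
    refine ⟨l.cons _ hqlt, by simp [hlen], ?_⟩
    rw [RelSeries.head_cons]
    exact hqmin.1.2

end Key

/-- Krull dimension of a module: the Krull dimension of its support. -/
noncomputable def mdim (R : Type*) [CommRing R] (M : Type*) [AddCommGroup M] [Module R M] :
    WithBot ℕ∞ :=
  Order.krullDim (Module.support R M)

/-- The little dimension of a module over a local ring:
`ldim_R M = inf { dim_R (Rx) : x ∈ M \ mM }` (infimum over the empty set is `⊤`). -/
noncomputable def ldim (R : Type*) [CommRing R] [IsLocalRing R] (M : Type*) [AddCommGroup M]
    [Module R M] : WithBot ℕ∞ :=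
  ⨅ x : {x : M // x ∉ (maximalIdeal R • ⊤ : Submodule R M)},
    mdim R (Submodule.span R {x.1})

/-- Depth of a module over a local ring: the supremum of lengths of regular sequences on `M`
consisting of elements of the maximal ideal. -/
noncomputable def mdepth (R : Type*) [CommRing R] [IsLocalRing R] (M : Type*) [AddCommGroup M]
    [Module R M] : ℕ∞ :=
  sSup {n : ℕ∞ | ∃ rs : List R, (rs.length : ℕ∞) = n ∧ (∀ r ∈ rs, r ∈ maximalIdeal R) ∧
    RingTheory.Sequence.IsRegular M rs}

section Conv

variable {R : Type*} [CommRing R] {M : Type*} [AddCommGroup M] [Module R M]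

/-- A prime containing the torsion ideal of `x` lies in the support of `R ∙ x`. -/
lemma mem_support_span_of_torsionOf_le {x : M} {p : PrimeSpectrum R}
    (h : Ideal.torsionOf R M x ≤ p.asIdeal) :
    p ∈ Module.support R (Submodule.span R ({x} : Set M)) := by
  rw [Module.mem_support_iff_exists_annihilator]
  refine ⟨⟨x, Submodule.mem_span_singleton_self x⟩, ?_⟩
  intro a ha
  rw [Submodule.mem_annihilator_span_singleton] at ha
  apply h
  rw [Ideal.mem_torsionOf_iff]
  exact congrArg Subtype.val ha

lemma chain_le_mdim {x : M} (l : LTSeries (PrimeSpectrum R))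
    (h : Ideal.torsionOf R M x ≤ l.head.asIdeal) :
    (l.length : WithBot ℕ∞) ≤ mdim R (Submodule.span R ({x} : Set M)) := by
  let l' : LTSeries (Module.support R (Submodule.span R ({x} : Set M))) :=
    { length := l.length
      toFun := fun i => ⟨l i, mem_support_span_of_torsionOf_le
        (h.trans ((PrimeSpectrum.asIdeal_le_asIdeal _ _).mpr (l.monotone (Fin.zero_le i))))⟩
      step := fun i => (Subtype.mk_lt_mk (p := (· ∈ Module.support R (Submodule.span R ({x} : Set M))))).mpr (l.step i) }
  exact Order.LTSeries.length_le_krullDim l'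

lemma mdim_span_le_mdim (x : M) :
    mdim R (Submodule.span R ({x} : Set M)) ≤ mdim R M := by
  have hsub : Module.support R (Submodule.span R ({x} : Set M)) ⊆ Module.support R M :=
    Module.support_subset_of_injective (Submodule.span R ({x} : Set M)).subtype
      (Submodule.injective_subtype _)
  exact Order.krullDim_le_of_strictMono (fun p => ⟨p.1, hsub p.2⟩)
    (fun a b hab => Subtype.mk_lt_mk.mpr hab)

end Conv

set_option maxHeartbeats 1000000 in
/-- `depth_R M ≤ ldim_R M ≤ dim_R M` for a module `M` with `M ≠ mM` over a
commutative noetherian local ring. -/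
theorem stmt_0 (R : Type*) [CommRing R] [IsLocalRing R] [IsNoetherianRing R]
    (M : Type*) [AddCommGroup M] [Module R M]
    (hM : (maximalIdeal R • ⊤ : Submodule R M) ≠ ⊤) :
    (mdepth R M : WithBot ℕ∞) ≤ ldim R M ∧ ldim R M ≤ mdim R M := by
  have hex : ∃ x : M, x ∉ (maximalIdeal R • ⊤ : Submodule R M) := by
    by_contra h
    push_neg at h
    exact hM (eq_top_iff.mpr fun x _ => h x)
  obtain ⟨x₀, hx₀⟩ := hex
  constructor
  · -- mdepth ≤ ldim
    rw [ldim]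
    refine le_iInf fun y => ?_
    obtain ⟨x, hx⟩ := y
    -- every element of the defining set of mdepth is ≤ mdim (span {x})
    have hall : ∀ n ∈ {n : ℕ∞ | ∃ rs : List R, (rs.length : ℕ∞) = n ∧
        (∀ r ∈ rs, r ∈ maximalIdeal R) ∧ RingTheory.Sequence.IsRegular M rs},
        (n : WithBot ℕ∞) ≤ mdim R (Submodule.span R ({x} : Set M)) := by
      rintro n ⟨rs, rfl, hmem, hreg⟩
      obtain ⟨l, hlen, hhead⟩ := key R rs M hmem hreg.toIsWeaklyRegular x hx
      have := chain_le_mdim l hhead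
      rw [hlen] at this
      exact_mod_cast this
    -- get a chain of length 0 to show mdim span x ≠ ⊥
    obtain ⟨l0, hl0, hh0⟩ := key R [] M (by simp) (RingTheory.Sequence.IsWeaklyRegular.nil R M) x hx
    have hne : mdim R (Submodule.span R ({x} : Set M)) ≠ ⊥ := by
      have := chain_le_mdim l0 hh0
      intro hbot
      rw [hbot] at this
      exact absurd (le_bot_iff.mp this) (by simp)
    obtain ⟨c, hc⟩ := WithBot.ne_bot_iff_exists.mp hne
    rw [← hc]
    refine WithBot.coe_le_coe.mpr (sSup_le fun n hn => ?_)
    have := hall n hn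
    rw [← hc] at this
    exact WithBot.coe_le_coe.mp this
  · -- ldim ≤ mdim
    have h1 : ldim R M ≤ mdim R (Submodule.span R ({x₀} : Set M)) := by
      rw [ldim]
      exact iInf_le (fun y : {x : M // x ∉ (maximalIdeal R • ⊤ : Submodule R M)} =>
        mdim R (Submodule.span R {y.1})) ⟨x₀, hx₀⟩
    exact h1.trans (mdim_span_le_mdim x₀)
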